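/- Let Φ : A → B be a completely positive map between unital C*-algebras with B ⊆ B(H) concretely represented, and let K be a Hilbert space. Suppose Φ ⊗_M id : A ⊗_M B(K) → B ⊗_M B(K) is a bounded linear map satisfying E^z (Φ ⊗_M id)(T) E_w = Φ(E^z T E_w) for all T in the matrix space and z, w ∈ K. Then Φ ⊗_M id maps positive elements of A ⊗_M B(K) to positive elements of B(H ⊗ K). -/

import Mathlib

open scoped ComplexOrder

/-- Let `Φ : A → B(H)` be a completely positive map on a unital
C*-algebra `A ⊆ B(H₀)` and `K` a Hilbert space.  If `Φlift` is a (bounded,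
linear on the matrix space) map satisfying the slice identity
`E^z Φlift(T) E_w = Φ(E^z T E_w)` for every `T ∈ A ⊗_M B(K)` and `z, w ∈ K`,
then `Φlift` maps positive elements of `A ⊗_M B(K)` to positive operators on
`H ⊗ K`.  Tensor products `H₀ ⊗ K` and `H ⊗ K` are modelled by `H0K`, `HK`
via the maps `tm0`, `tm`. -/
theorem stmt6
    {H₀ H K H0K HK : Type*}
    [NormedAddCommGroup H₀] [InnerProductSpace ℂ H₀] [CompleteSpace H₀]
    [NormedAddCommGroup H] [InnerProductSpace ℂ H] [CompleteSpace H]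
    [NormedAddCommGroup K] [InnerProductSpace ℂ K] [CompleteSpace K]
    [NormedAddCommGroup H0K] [InnerProductSpace ℂ H0K] [CompleteSpace H0K]
    [NormedAddCommGroup HK] [InnerProductSpace ℂ HK] [CompleteSpace HK]
    (tm0 : H₀ →L[ℂ] K →L[ℂ] H0K)
    (htm0 : ∀ (u v : H₀) (z w : K),
      (inner ℂ (tm0 u z) (tm0 v w) : ℂ) = (inner ℂ u v : ℂ) * (inner ℂ z w : ℂ))
    (htot0 : Dense (Submodule.span ℂ
      (Set.range fun p : H₀ × K => tm0 p.1 p.2) : Set H0K))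
    (tm : H →L[ℂ] K →L[ℂ] HK)
    (htm : ∀ (u v : H) (z w : K),
      (inner ℂ (tm u z) (tm v w) : ℂ) = (inner ℂ u v : ℂ) * (inner ℂ z w : ℂ))
    (htot : Dense (Submodule.span ℂ
      (Set.range fun p : H × K => tm p.1 p.2) : Set HK))
    (A : StarSubalgebra ℂ (H₀ →L[ℂ] H₀)) (hA : IsClosed (A : Set (H₀ →L[ℂ] H₀)))
    (Φ : A →ₗ[ℂ] (H →L[ℂ] H))
    -- complete positivity of Φ
    (hcp : ∀ (n : ℕ) (M : Matrix (Fin n) (Fin n) A),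
      (∀ v : Fin n → H₀,
        0 ≤ ∑ i, ∑ j, (inner ℂ (v i) ((M i j : H₀ →L[ℂ] H₀) (v j)) : ℂ)) →
      ∀ v : Fin n → H,
        0 ≤ ∑ i, ∑ j, (inner ℂ (v i) ((Φ (M i j)) (v j)) : ℂ))
    (Φlift : (H0K →L[ℂ] H0K) → (HK →L[ℂ] HK))
    -- boundedness and linearity of the lifting on the matrix space
    (hbdd : ∃ C : ℝ, ∀ T : H0K →L[ℂ] H0K,
      (∀ z w : K,
        (ContinuousLinearMap.adjoint (tm0.flip z)) ∘L T ∘L (tm0.flip w) ∈ A) →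
      ‖Φlift T‖ ≤ C * ‖T‖)
    (hadd : ∀ S T : H0K →L[ℂ] H0K,
      (∀ z w : K,
        (ContinuousLinearMap.adjoint (tm0.flip z)) ∘L S ∘L (tm0.flip w) ∈ A) →
      (∀ z w : K,
        (ContinuousLinearMap.adjoint (tm0.flip z)) ∘L T ∘L (tm0.flip w) ∈ A) →
      Φlift (S + T) = Φlift S + Φlift T)
    (hsmul : ∀ (c : ℂ) (T : H0K →L[ℂ] H0K),
      (∀ z w : K,
        (ContinuousLinearMap.adjoint (tm0.flip z)) ∘L T ∘L (tm0.flip w) ∈ A) →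
      Φlift (c • T) = c • Φlift T)
    -- the characteristic slice identity of the matrix-space lifting
    (hslice : ∀ (T : H0K →L[ℂ] H0K)
      (hT : ∀ z w : K,
        (ContinuousLinearMap.adjoint (tm0.flip z)) ∘L T ∘L (tm0.flip w) ∈ A),
      ∀ z w : K,
        (ContinuousLinearMap.adjoint (tm.flip z)) ∘L (Φlift T) ∘L (tm.flip w)
          = (Φ ⟨(ContinuousLinearMap.adjoint (tm0.flip z)) ∘L T ∘L (tm0.flip w),
              hT z w⟩ : H →L[ℂ] H)) :
    ∀ (T : H0K →L[ℂ] H0K),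
      (∀ z w : K,
        (ContinuousLinearMap.adjoint (tm0.flip z)) ∘L T ∘L (tm0.flip w) ∈ A) →
      T.IsPositive → (Φlift T).IsPositive := by

  intro T hT hTpos
  set S := Φlift T with hS
  -- Step 1: nonnegativity of ⟪x, S x⟫ for x a finite sum of elementary tensors
  have key : ∀ (n : ℕ) (u : Fin n → H) (z : Fin n → K),
      0 ≤ (inner ℂ (∑ i, tm (u i) (z i)) (S (∑ i, tm (u i) (z i))) : ℂ) := by
    intro n u z
    set M : Matrix (Fin n) (Fin n) A := fun i j =>
      ⟨(ContinuousLinearMap.adjoint (tm0.flip (z i))) ∘L T ∘L (tm0.flip (z j)),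
        hT (z i) (z j)⟩ with hM
    have hMpos : ∀ v : Fin n → H₀,
        0 ≤ ∑ i, ∑ j, (inner ℂ (v i) ((M i j : H₀ →L[ℂ] H₀) (v j)) : ℂ) := by
      intro v
      have hy : ∑ i, ∑ j, (inner ℂ (v i) ((M i j : H₀ →L[ℂ] H₀) (v j)) : ℂ)
          = inner ℂ (∑ i, tm0 (v i) (z i)) (T (∑ j, tm0 (v j) (z j))) := by
        rw [map_sum, sum_inner]
        refine Finset.sum_congr rfl fun i _ => ?_
        rw [inner_sum]
        refine Finset.sum_congr rfl fun j _ => ?_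
        simp only [hM, ContinuousLinearMap.comp_apply,
          ContinuousLinearMap.flip_apply, ContinuousLinearMap.adjoint_inner_right]
      rw [hy]
      set y := ∑ i, tm0 (v i) (z i)
      obtain ⟨h1, h2⟩ := (ContinuousLinearMap.isPositive_iff_complex T).mp hTpos y
      rw [← inner_conj_symm, ← h1]
      rw [Complex.conj_ofReal]
      exact_mod_cast h2
    have hsum := hcp n M hMpos u
    have hx : ∑ i, ∑ j, (inner ℂ (u i) ((Φ (M i j)) (u j)) : ℂ)
        = inner ℂ (∑ i, tm (u i) (z i)) (S (∑ i, tm (u i) (z i))) := by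
      rw [map_sum, sum_inner]
      refine Finset.sum_congr rfl fun i _ => ?_
      rw [inner_sum]
      refine Finset.sum_congr rfl fun j _ => ?_
      rw [← hslice T hT (z i) (z j)]
      simp only [← hS, ContinuousLinearMap.comp_apply,
        ContinuousLinearMap.flip_apply, ContinuousLinearMap.adjoint_inner_right]
    rw [← hx]
    exact hsum
  -- Step 2: every element of the span is such a finite sum
  have hrep : ∀ x ∈ Submodule.span ℂ (Set.range fun p : H × K => tm p.1 p.2),
      ∃ (n : ℕ) (u : Fin n → H) (z : Fin n → K), x = ∑ i, tm (u i) (z i) := by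
    intro x hx
    induction hx using Submodule.span_induction with
    | mem x hx =>
        obtain ⟨⟨u, z⟩, rfl⟩ := hx
        exact ⟨1, fun _ => u, fun _ => z, by simp⟩
    | zero => exact ⟨0, finZeroElim, finZeroElim, by simp⟩
    | add x y _ _ hx hy =>
        obtain ⟨n, u, z, rfl⟩ := hx
        obtain ⟨m, u', z', rfl⟩ := hy
        refine ⟨n + m, Fin.append u u', Fin.append z z', ?_⟩
        rw [Fin.sum_univ_add]
        simp [Fin.append_left, Fin.append_right]
    | smul c x _ hx =>
        obtain ⟨n, u, z, rfl⟩ := hx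
        refine ⟨n, c • u, z, ?_⟩
        rw [Finset.smul_sum]
        refine Finset.sum_congr rfl fun i _ => ?_
        simp [map_smul]
  -- Step 3: nonnegativity for all x by density
  have hall : ∀ x : HK, 0 ≤ (inner ℂ x (S x) : ℂ) := by
    have hcont : Continuous fun x : HK => (inner ℂ x (S x) : ℂ) :=
      continuous_id.inner S.continuous
    have hclosed : IsClosed {x : HK | 0 ≤ (inner ℂ x (S x) : ℂ)} := by
      have : {x : HK | 0 ≤ (inner ℂ x (S x) : ℂ)}
          = (fun x : HK => (inner ℂ x (S x) : ℂ).re) ⁻¹' Set.Ici 0 ∩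
            (fun x : HK => (inner ℂ x (S x) : ℂ).im) ⁻¹' {0} := by
        ext x
        simp only [Set.mem_setOf_eq, Set.mem_inter_iff, Set.mem_preimage,
          Set.mem_Ici, Set.mem_singleton_iff, Complex.nonneg_iff]
        tauto
      rw [this]
      exact (IsClosed.preimage (Complex.continuous_re.comp hcont) isClosed_Ici).inter
        (IsClosed.preimage (Complex.continuous_im.comp hcont) isClosed_singleton)
    have hsub : (Submodule.span ℂ (Set.range fun p : H × K => tm p.1 p.2) : Set HK)
        ⊆ {x : HK | 0 ≤ (inner ℂ x (S x) : ℂ)} := by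
      intro x hx
      obtain ⟨n, u, z, rfl⟩ := hrep x hx
      exact key n u z
    intro x
    have : x ∈ closure (Submodule.span ℂ
        (Set.range fun p : H × K => tm p.1 p.2) : Set HK) := htot x
    exact (closure_minimal hsub hclosed) this
  -- Step 4: conclude positivity
  rw [ContinuousLinearMap.isPositive_iff_complex]
  intro x
  have h := hall x
  obtain ⟨hre, him⟩ := Complex.nonneg_iff.mp h
  have hconj : (inner ℂ (S x) x : ℂ) = inner ℂ x (S x) := by
    rw [← inner_conj_symm]
    exact Complex.conj_eq_iff_im.mpr him.symm
  constructor
  · rw [hconj]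
    apply Complex.ext
    · simp
    · simpa using him
  · rw [hconj]
    exact hre
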